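/- Let F be a continuous cdf on ℝ with finite mean, and let r ≥ 2. Then the r-th L-moment admits the representation λ_r = −∫_ℝ K_r(F(x)) dF^{-1}(x) = −∫₀¹ K_r(t) dF^{-1}(t), equivalently λ_r = ∫_ℝ L_{r-1}(F(x))·x dF(x), where K_r is the integrated shifted Legendre polynomial. -/

import Mathlib

open MeasureTheory Set

/-- The shifted Legendre polynomial `L_r(u) = Σ_{k=0}^r (−1)^{r−k} C(r,k) C(r+k,k) u^k`. -/
noncomputable def shiftedLegendre (r : ℕ) (u : ℝ) : ℝ :=
  ∑ k ∈ Finset.range (r + 1),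
    (-1 : ℝ) ^ (r - k) * (r.choose k) * ((r + k).choose k) * u ^ k

/-- The integrated shifted Legendre polynomial `K_r(t) = ∫₀ᵗ L_{r−1}(u) du`. -/
noncomputable def intLegendre (r : ℕ) (t : ℝ) : ℝ :=
  ∫ u in (0:ℝ)..t, shiftedLegendre (r - 1) u

section CombAux

lemma neg_one_pow_sub_int {m k : ℕ} (h : k ≤ m) : ((-1:ℤ))^(m-k) = (-1)^m * (-1)^k := by
  have h1 : ((-1:ℤ))^(m-k) * (-1)^k = (-1)^m := by
    rw [← pow_add, Nat.sub_add_cancel h]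
  have h2 : ((-1:ℤ))^k * (-1)^k = 1 := by
    rw [← mul_pow]; norm_num
  calc ((-1:ℤ))^(m-k) = (-1)^(m-k) * ((-1)^k * (-1)^k) := by rw [h2, mul_one]
    _ = ((-1)^(m-k) * (-1)^k) * (-1)^k := by ring
    _ = (-1)^m * (-1)^k := by rw [h1]

lemma inner_alt (m j : ℕ) (hj : j ≤ m) :
    ∑ k ∈ Finset.range (m+1), (-1:ℤ)^(m-k) * ((m+1).choose (k+1)) * ((k+1).choose j)
      = (-1)^m * (if j = 0 then 1 else 0) := by
  have hS : ∑ t ∈ Finset.range (m+2), (-1:ℤ)^t * ((m+1).choose t) * (t.choose j) = 0 := by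
    have hzero : ∀ t ∈ Finset.range (m+2), t ∉ Finset.Ico j (m+2) →
        (-1:ℤ)^t * ((m+1).choose t) * (t.choose j) = 0 := by
      intro t ht hnot
      simp only [Finset.mem_range] at ht
      simp only [Finset.mem_Ico] at hnot
      have : t < j := by omega
      rw [Nat.choose_eq_zero_of_lt this]
      simp
    have hsub : Finset.Ico j (m+2) ⊆ Finset.range (m+2) := by
      intro t ht; simp only [Finset.mem_Ico] at ht; simp [ht.2]
    rw [← Finset.sum_subset hsub (fun t ht h2 => hzero t ht h2)]
    rw [Finset.sum_Ico_eq_sum_range]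
    have hrw : ∀ s ∈ Finset.range (m+2-j), (-1:ℤ)^(j+s) * ((m+1).choose (j+s)) * ((j+s).choose j)
        = ((-1)^j * ((m+1).choose j)) * ((-1)^s * ((m+1-j).choose s)) := by
      intro s hs
      simp only [Finset.mem_range] at hs
      have h1 : (m+1).choose (j+s) * (j+s).choose j = (m+1).choose j * ((m+1-j).choose s) := by
        have := Nat.choose_mul (n := m+1) (k := j+s) (s := j) (by omega)
        simpa [Nat.add_sub_cancel_left] using this
      have h1' : (((m+1).choose (j+s)) : ℤ) * ((j+s).choose j) = ((m+1).choose j) * ((m+1-j).choose s) := by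
        exact_mod_cast congrArg (Nat.cast : ℕ → ℤ) h1
      rw [pow_add]
      calc (-1:ℤ)^j * (-1)^s * ((m+1).choose (j+s)) * ((j+s).choose j)
          = (-1:ℤ)^j * (-1)^s * (((m+1).choose (j+s)) * ((j+s).choose j)) := by ring
        _ = (-1:ℤ)^j * (-1)^s * (((m+1).choose j) * ((m+1-j).choose s)) := by rw [h1']
        _ = ((-1)^j * ((m+1).choose j)) * ((-1)^s * ((m+1-j).choose s)) := by ring
    rw [Finset.sum_congr rfl hrw, ← Finset.mul_sum]
    have : m + 2 - j = (m + 1 - j) + 1 := by omega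
    rw [this, Int.alternating_sum_range_choose]
    have : ¬ (m + 1 - j = 0) := by omega
    simp [this]
  -- now peel off t = 0
  rw [Finset.sum_range_succ'] at hS
  simp only [pow_zero, Nat.choose_zero_right, Nat.cast_one, one_mul, mul_one] at hS
  -- hS : ∑ k ∈ Finset.range (m+1), (-1)^(k+1) * C(m+1,k+1) * C(k+1,j) + C(0,j) = 0
  have hC0 : ((Nat.choose 0 j : ℕ) : ℤ) = if j = 0 then 1 else 0 := by
    cases j <;> simp [Nat.choose]
  have key : ∑ k ∈ Finset.range (m+1), (-1:ℤ)^(k+1) * ((m+1).choose (k+1)) * ((k+1).choose j)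
      = -(if j = 0 then 1 else 0) := by
    rw [eq_neg_iff_add_eq_zero, ← hC0]
    convert hS using 2
  calc ∑ k ∈ Finset.range (m+1), (-1:ℤ)^(m-k) * ((m+1).choose (k+1)) * ((k+1).choose j)
      = ∑ k ∈ Finset.range (m+1), (-1:ℤ)^m * (-(-1:ℤ)^(k+1) * ((m+1).choose (k+1)) * ((k+1).choose j)) := by
        apply Finset.sum_congr rfl
        intro k hk
        simp only [Finset.mem_range] at hk
        rw [neg_one_pow_sub_int (by omega : k ≤ m)]
        rw [pow_succ]
        ring
    _ = (-1:ℤ)^m * (-∑ k ∈ Finset.range (m+1), (-1:ℤ)^(k+1) * ((m+1).choose (k+1)) * ((k+1).choose j)) := by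
        rw [← Finset.mul_sum, ← Finset.sum_neg_distrib]
        congr 1
        apply Finset.sum_congr rfl
        intro k _; ring
    _ = (-1)^m * (if j = 0 then 1 else 0) := by rw [key, neg_neg]

lemma comb_main (m : ℕ) (hm : 1 ≤ m) :
    ∑ k ∈ Finset.range (m+1), (-1:ℤ)^(m-k) * ((m+1).choose (k+1)) * ((m+k).choose k) = 0 := by
  have hsym : ∀ k, ((m+k).choose k : ℤ) = ((m+k).choose m : ℤ) := by
    intro k
    rw [← Nat.choose_symm_add]
  have hvdm : ∀ k, ((m+k).choose m : ℤ)
      = ∑ ij ∈ Finset.HasAntidiagonal.antidiagonal m, ((m-1).choose ij.1 : ℤ) * ((k+1).choose ij.2 : ℤ) := by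
    intro k
    have : m + k = (m-1) + (k+1) := by omega
    rw [this, Nat.add_choose_eq]
    push_cast
    rfl
  calc ∑ k ∈ Finset.range (m+1), (-1:ℤ)^(m-k) * ((m+1).choose (k+1)) * ((m+k).choose k)
      = ∑ k ∈ Finset.range (m+1), ∑ ij ∈ Finset.HasAntidiagonal.antidiagonal m,
          ((m-1).choose ij.1 : ℤ) * ((-1:ℤ)^(m-k) * ((m+1).choose (k+1)) * ((k+1).choose ij.2)) := by
        apply Finset.sum_congr rfl
        intro k _
        rw [hsym k, hvdm k, Finset.mul_sum]
        apply Finset.sum_congr rfl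
        intro ij _
        ring
    _ = ∑ ij ∈ Finset.HasAntidiagonal.antidiagonal m, ((m-1).choose ij.1 : ℤ) *
          ∑ k ∈ Finset.range (m+1), ((-1:ℤ)^(m-k) * ((m+1).choose (k+1)) * ((k+1).choose ij.2)) := by
        rw [Finset.sum_comm]
        apply Finset.sum_congr rfl
        intro ij _
        rw [Finset.mul_sum]
    _ = ∑ ij ∈ Finset.HasAntidiagonal.antidiagonal m, ((m-1).choose ij.1 : ℤ) *
          ((-1)^m * (if ij.2 = 0 then 1 else 0)) := by
        apply Finset.sum_congr rfl
        intro ij hij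
        rw [inner_alt m ij.2 (by
          rw [Finset.HasAntidiagonal.mem_antidiagonal] at hij; omega)]
    _ = 0 := by
        rw [Finset.sum_eq_single (m, 0)]
        · simp [Nat.choose_eq_zero_of_lt (by omega : m - 1 < m)]
        · intro ij hij hne
          rw [Finset.HasAntidiagonal.mem_antidiagonal] at hij
          have : ij.2 ≠ 0 := by
            intro h; apply hne
            have : ij.1 = m := by omega
            exact Prod.ext this h
          simp [this]
        · intro h
          exfalso; apply h
          simp [Finset.HasAntidiagonal.mem_antidiagonal]

end CombAux

lemma shiftedLegendre_continuous (m : ℕ) : Continuous (shiftedLegendre m) := by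
  unfold shiftedLegendre
  exact continuous_finset_sum _ (fun k _ => by fun_prop)

lemma integral_shiftedLegendre_eq_zero (m : ℕ) (hm : 1 ≤ m) :
    ∫ u in (0:ℝ)..1, shiftedLegendre m u = 0 := by
  have h1 : ∫ u in (0:ℝ)..1, shiftedLegendre m u
      = ∑ k ∈ Finset.range (m+1), ((-1:ℝ)^(m-k) * (m.choose k) * ((m+k).choose k)) * (1/(k+1)) := by
    unfold shiftedLegendre
    rw [intervalIntegral.integral_finset_sum (fun k _ => by
      apply Continuous.intervalIntegrable; continuity)]
    apply Finset.sum_congr rfl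
    intro k _
    have : ∀ u : ℝ, (-1:ℝ)^(m-k) * (m.choose k) * ((m+k).choose k) * u ^ k
        = ((-1:ℝ)^(m-k) * (m.choose k) * ((m+k).choose k)) * u ^ k := fun u => by ring
    rw [intervalIntegral.integral_congr (fun u _ => this u), intervalIntegral.integral_const_mul,
      integral_pow]
    norm_num
  rw [h1]
  have hmul : (((m:ℝ)+1)) ≠ 0 := by positivity
  have key : (∑ k ∈ Finset.range (m+1), ((-1:ℝ)^(m-k) * (m.choose k) * ((m+k).choose k)) * (1/(k+1)))
      * ((m:ℝ)+1) = 0 := by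
    rw [Finset.sum_mul]
    have : ∀ k ∈ Finset.range (m+1), ((-1:ℝ)^(m-k) * (m.choose k) * ((m+k).choose k)) * (1/(k+1)) * ((m:ℝ)+1)
        = (-1:ℝ)^(m-k) * (((m+1).choose (k+1) : ℕ)) * (((m+k).choose k : ℕ)) := by
      intro k _
      have hnat : (m+1) * (m.choose k) = ((m+1).choose (k+1)) * (k+1) := by
        exact_mod_cast Nat.add_one_mul_choose_eq m k
      have hcast : ((m:ℝ)+1) * (m.choose k) = (((m+1).choose (k+1) : ℕ) : ℝ) * ((k:ℝ)+1) := by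
        exact_mod_cast congrArg (Nat.cast : ℕ → ℝ) hnat
      have hk1 : ((k:ℝ)+1) ≠ 0 := by positivity
      have h2 : (m.choose k : ℝ) * ((m:ℝ)+1) / ((k:ℝ)+1) = (((m+1).choose (k+1) : ℕ) : ℝ) := by
        rw [div_eq_iff hk1]
        linarith [hcast]
      calc ((-1:ℝ)^(m-k) * (m.choose k) * ((m+k).choose k)) * (1/((k:ℝ)+1)) * ((m:ℝ)+1)
          = (-1:ℝ)^(m-k) * ((m+k).choose k) * ((m.choose k : ℝ) * ((m:ℝ)+1) / ((k:ℝ)+1)) := by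
            ring
        _ = (-1:ℝ)^(m-k) * ((m+k).choose k) * (((m+1).choose (k+1) : ℕ) : ℝ) := by rw [h2]
        _ = (-1:ℝ)^(m-k) * (((m+1).choose (k+1) : ℕ)) * (((m+k).choose k : ℕ)) := by ring
    rw [Finset.sum_congr rfl this]
    have := comb_main m hm
    have hcast := congrArg (Int.cast : ℤ → ℝ) this
    push_cast at hcast
    convert hcast using 2
  exact (mul_eq_zero.mp key).resolve_right hmul

lemma shiftedLegendre_bound (m : ℕ) :
    ∃ C : ℝ, ∀ u ∈ Icc (0:ℝ) 1, |shiftedLegendre m u| ≤ C := by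
  refine ⟨∑ k ∈ Finset.range (m+1), ((m.choose k : ℝ) * ((m+k).choose k)), ?_⟩
  intro u hu
  unfold shiftedLegendre
  refine (Finset.abs_sum_le_sum_abs _ _).trans (Finset.sum_le_sum ?_)
  intro k _
  have h1 : |(-1 : ℝ) ^ (m - k) * (m.choose k) * ((m + k).choose k) * u ^ k|
      = (m.choose k : ℝ) * ((m+k).choose k) * |u| ^ k := by
    rw [abs_mul, abs_mul, abs_mul, abs_pow, abs_pow, abs_neg, abs_one, one_pow, one_mul,
      Nat.abs_cast, Nat.abs_cast]
  rw [h1]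
  have h2 : |u| ^ k ≤ 1 := by
    have hle : |u| ≤ 1 := abs_le.mpr ⟨by linarith [hu.1], hu.2⟩
    exact pow_le_one₀ (abs_nonneg u) hle
  have h3 : (0:ℝ) ≤ (m.choose k : ℝ) * ((m+k).choose k) :=
    mul_nonneg (Nat.cast_nonneg _) (Nat.cast_nonneg _)
  calc (m.choose k : ℝ) * ((m+k).choose k) * |u| ^ k
      ≤ (m.choose k : ℝ) * ((m+k).choose k) * 1 := mul_le_mul_of_nonneg_left h2 h3
    _ = (m.choose k : ℝ) * ((m+k).choose k) := mul_one _

/-- For a continuous cdf `F` with finite mean and `r ≥ 2`, the r-th L-moment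
`λ_r = ∫₀¹ F⁻¹(u)L_{r−1}(u)du` admits the representations
`λ_r = −∫ K_r(F(x)) dF⁻¹` (i.e. `−∫_ℝ K_r(F(x)) dx` after the change of variables) and
`λ_r = ∫ L_{r−1}(F(x))·x dF(x)`. -/
theorem stmt_16 (μ : Measure ℝ) [IsProbabilityMeasure μ]
    (F : ℝ → ℝ) (hF : ∀ x, F x = (μ (Iic x)).toReal) (hFcont : Continuous F)
    (hmean : Integrable (fun x => |x|) μ)
    (r : ℕ) (hr : 2 ≤ r)
    (lam : ℝ)
    (hlam : lam = ∫ u in Ioo (0:ℝ) 1, (sInf {x | u ≤ F x}) * shiftedLegendre (r - 1) u) :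
    lam = -∫ x, intLegendre r (F x) ∧
    lam = ∫ x, shiftedLegendre (r - 1) (F x) * x ∂μ := by
  have hm1 : 1 ≤ r - 1 := by omega
  set L : ℝ → ℝ := shiftedLegendre (r - 1) with hLdef
  set Q : ℝ → ℝ := fun u => sInf {x | u ≤ F x} with hQdef
  set ν : Measure ℝ := volume.restrict (Ioo (0:ℝ) 1) with hνdef
  have hLcont : Continuous L := shiftedLegendre_continuous (r - 1)
  have hprob : ∀ x, μ (Iic x) ≠ ⊤ := fun x => measure_ne_top μ _
  have hF0 : ∀ x, 0 ≤ F x := fun x => by rw [hF x]; exact ENNReal.toReal_nonneg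
  have hF1 : ∀ x, F x ≤ 1 := by
    intro x; rw [hF x]
    have h := prob_le_one (μ := μ) (s := Iic x)
    have := ENNReal.toReal_mono (by simp) h
    simpa using this
  have hFmono : Monotone F := by
    intro x y hxy
    rw [hF x, hF y]
    exact ENNReal.toReal_mono (hprob y) (measure_mono (Iic_subset_Iic.2 hxy))
  have hFtop : Filter.Tendsto F Filter.atTop (nhds 1) := by
    have h := tendsto_measure_Iic_atTop μ
    have h2 := (ENNReal.tendsto_toReal (measure_ne_top μ univ)).comp h
    have h3 : (fun x => (μ (Iic x)).toReal) = F := by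
      funext x; rw [hF x]
    rw [Function.comp_def] at h2
    rw [h3] at h2
    simpa using h2
  have hFbot : Filter.Tendsto F Filter.atBot (nhds 0) := by
    have hIic : Filter.Tendsto (fun x : ℝ => μ (Iic x)) Filter.atBot
        (nhds (μ (⋂ x : ℝ, Iic x))) :=
      tendsto_measure_iInter_atBot (fun i => measurableSet_Iic.nullMeasurableSet)
        (fun i j h => Iic_subset_Iic.2 h) ⟨0, measure_ne_top μ _⟩
    have hempty : (⋂ x : ℝ, Iic x) = ∅ := by
      ext y
      simp only [mem_iInter, mem_Iic, mem_empty_iff_false, iff_false, not_forall]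
      exact ⟨y - 1, by push_neg; linarith⟩
    rw [hempty] at hIic
    have h2 := (ENNReal.tendsto_toReal (by simp : μ (∅ : Set ℝ) ≠ ⊤)).comp hIic
    have h3 : (fun x => (μ (Iic x)).toReal) = F := by funext x; rw [hF x]
    rw [Function.comp_def, h3] at h2
    simpa using h2
  have hexlt : ∀ u : ℝ, 0 < u → ∃ b, F b < u := fun u hu =>
    (hFbot.eventually_lt_const hu).exists
  have hexgt : ∀ u : ℝ, u < 1 → ∃ c, u < F c := fun u hu =>
    (hFtop.eventually_const_lt hu).exists
  have hne : ∀ u ∈ Ioo (0:ℝ) 1, {x | u ≤ F x}.Nonempty := by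
    intro u hu
    obtain ⟨c, hc⟩ := hexgt u hu.2
    exact ⟨c, le_of_lt hc⟩
  have hbdd : ∀ u ∈ Ioo (0:ℝ) 1, BddBelow {x | u ≤ F x} := by
    intro u hu
    obtain ⟨b, hb⟩ := hexlt u hu.1
    refine ⟨b, fun x hx => ?_⟩
    by_contra h
    push_neg at h
    exact absurd (le_trans hx (hFmono h.le)) (not_le.2 hb)
  have hmem : ∀ u ∈ Ioo (0:ℝ) 1, u ≤ F (Q u) := by
    intro u hu
    have hclosed : IsClosed {x | u ≤ F x} := isClosed_le continuous_const hFcont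
    exact hclosed.csInf_mem (hne u hu) (hbdd u hu)
  have hgal : ∀ u ∈ Ioo (0:ℝ) 1, ∀ x, Q u ≤ x ↔ u ≤ F x := by
    intro u hu x
    constructor
    · intro h
      exact le_trans (hmem u hu) (hFmono h)
    · intro h
      exact csInf_le (hbdd u hu) h
  have hFQ : ∀ u ∈ Ioo (0:ℝ) 1, F (Q u) = u := by
    intro u hu
    obtain ⟨b, hb⟩ := hexlt u hu.1
    obtain ⟨c, hc⟩ := hexgt u hu.2
    have hbc : b ≤ c := by
      by_contra h
      push_neg at h
      exact absurd (lt_trans hb hc) (not_lt.2 (hFmono h.le))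
    have hsub := intermediate_value_Icc hbc hFcont.continuousOn
    have hu' : u ∈ Icc (F b) (F c) := ⟨hb.le, hc.le⟩
    obtain ⟨y, _, hFy⟩ := hsub hu'
    have hQy : Q u ≤ y := csInf_le (hbdd u hu) (by simp only [mem_setOf_eq, hFy]; exact le_refl u)
    exact le_antisymm (by calc F (Q u) ≤ F y := hFmono hQy
                            _ = u := hFy) (hmem u hu)
  have hQmono : MonotoneOn Q (Ioo (0:ℝ) 1) := by
    intro u hu v hv huv
    exact csInf_le_csInf (hbdd u hu) (hne v hv) (fun x hx => le_trans huv hx)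
  have hQae : AEMeasurable Q ν :=
    aemeasurable_restrict_of_monotoneOn measurableSet_Ioo hQmono
  haveI hνprob : IsProbabilityMeasure ν := by
    constructor
    rw [hνdef, Measure.restrict_apply_univ, Real.volume_Ioo]
    norm_num
  have hνapp : ∀ t : Set ℝ, ν t = volume (t ∩ Ioo 0 1) := by
    intro t; rw [hνdef, Measure.restrict_apply' measurableSet_Ioo]
  have hmap : Measure.map Q ν = μ := by
    haveI : IsProbabilityMeasure (Measure.map Q ν) := Measure.isProbabilityMeasure_map hQae
    apply MeasureTheory.Measure.ext_of_Iic
    intro a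
    rw [Measure.map_apply_of_aemeasurable hQae measurableSet_Iic]
    have hset : Q ⁻¹' Iic a ∩ Ioo 0 1 = Iic (F a) ∩ Ioo 0 1 := by
      ext u
      simp only [mem_inter_iff, mem_preimage, mem_Iic, mem_Ioo]
      constructor
      · rintro ⟨h1, h2⟩
        exact ⟨(hgal u h2 a).mp h1, h2⟩
      · rintro ⟨h1, h2⟩
        exact ⟨(hgal u h2 a).mpr h1, h2⟩
    rw [hνapp, hset]
    have hμa : μ (Iic a) = ENNReal.ofReal (F a) := by
      rw [hF a, ENNReal.ofReal_toReal (hprob a)]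
    rw [hμa]
    rcases eq_or_lt_of_le (hF1 a) with h1 | h1
    · have : Iic (F a) ∩ Ioo 0 1 = Ioo (0:ℝ) 1 := by
        ext u
        simp only [mem_inter_iff, mem_Iic, mem_Ioo, h1]
        constructor
        · rintro ⟨_, h⟩; exact h
        · rintro ⟨h2, h3⟩; exact ⟨by linarith, h2, h3⟩
      rw [this, Real.volume_Ioo, h1]
      norm_num
    · have : Iic (F a) ∩ Ioo 0 1 = Ioc (0:ℝ) (F a) := by
        ext u
        simp only [mem_inter_iff, mem_Iic, mem_Ioo, mem_Ioc]
        constructor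
        · rintro ⟨h2, h3, _⟩; exact ⟨h3, h2⟩
        · rintro ⟨h2, h3⟩; exact ⟨h3, h2, lt_of_le_of_lt h3 h1⟩
      rw [this, Real.volume_Ioc]
      norm_num
  have hQint : Integrable Q ν := by
    have hid : Integrable (fun x : ℝ => x) μ := by
      refine hmean.mono' aestronglyMeasurable_id (ae_of_all _ (fun x => ?_))
      simp [Real.norm_eq_abs]
    rw [← hmap] at hid
    have := (integrable_map_measure aestronglyMeasurable_id hQae).mp hid
    exact this
  -- Second conjunct
  have conj2 : lam = ∫ x, L (F x) * x ∂μ := by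
    rw [hlam, ← hmap]
    rw [integral_map hQae (Continuous.aestronglyMeasurable
      (show Continuous (fun x : ℝ => L (F x) * x) from (hLcont.comp hFcont).mul continuous_id))]
    refine (setIntegral_congr_fun measurableSet_Ioo (fun u hu => ?_)).symm
    simp only [hFQ u hu]
    ring
  refine ⟨?_, conj2⟩
  -- First conjunct
  obtain ⟨C, hC⟩ := shiftedLegendre_bound (r - 1)
  set K : ℝ → ℝ := fun x => intLegendre r (F x) with hKdef
  set f1 : ℝ → ℝ → ℝ := fun u x => if F x < u then L u else 0 with hf1def
  set f2 : ℝ → ℝ → ℝ := fun u x => if u ≤ F x then L u else 0 with hf2def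
  set S1 : Set (ℝ × ℝ) := {p | F p.2 < p.1} with hS1def
  set S2 : Set (ℝ × ℝ) := {p | p.1 ≤ F p.2} with hS2def
  have hS1m : MeasurableSet S1 := (isOpen_lt (hFcont.comp continuous_snd) continuous_fst).measurableSet
  have hS2m : MeasurableSet S2 := (isClosed_le continuous_fst (hFcont.comp continuous_snd)).measurableSet
  have hf1m : Measurable (Function.uncurry f1) := by
    have : Function.uncurry f1 = fun p : ℝ × ℝ => if p ∈ S1 then L p.1 else 0 := rfl
    rw [this]
    exact Measurable.ite hS1m (hLcont.measurable.comp measurable_fst) measurable_const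
  have hf2m : Measurable (Function.uncurry f2) := by
    have : Function.uncurry f2 = fun p : ℝ × ℝ => if p ∈ S2 then L p.1 else 0 := rfl
    rw [this]
    exact Measurable.ite hS2m (hLcont.measurable.comp measurable_fst) measurable_const
  have hQfin : ∫⁻ u, ENNReal.ofReal |Q u| ∂ν < ⊤ := by
    have h := hQint.hasFiniteIntegral
    rw [hasFiniteIntegral_iff_norm] at h
    simpa [Real.norm_eq_abs] using h
  -- finiteness of the product sets
  have hpre1 : ∀ u ∈ Ioo (0:ℝ) 1, Prod.mk u ⁻¹' S1 = Iio (Q u) := by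
    intro u hu
    ext x
    simp only [mem_preimage, hS1def, mem_setOf_eq, mem_Iio]
    rw [← not_le, ← not_le, not_iff_not]
    exact (hgal u hu x).symm
  have hpre2 : ∀ u ∈ Ioo (0:ℝ) 1, Prod.mk u ⁻¹' S2 = Ici (Q u) := by
    intro u hu
    ext x
    simp only [mem_preimage, hS2def, mem_setOf_eq, mem_Ici]
    exact (hgal u hu x).symm
  have hfin1 : (ν.prod (volume.restrict (Ioi (0:ℝ)))) S1 < ⊤ := by
    rw [Measure.prod_apply hS1m]
    refine lt_of_le_of_lt ?_ hQfin
    refine lintegral_mono_ae ?_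
    filter_upwards [ae_restrict_mem measurableSet_Ioo] with u hu
    rw [hpre1 u hu, Measure.restrict_apply' measurableSet_Ioi]
    have : Iio (Q u) ∩ Ioi 0 = Ioo 0 (Q u) := by
      ext x; simp only [mem_inter_iff, mem_Iio, mem_Ioi, mem_Ioo]; tauto
    rw [this, Real.volume_Ioo]
    exact ENNReal.ofReal_le_ofReal (by simp [abs_le, le_abs_self, neg_abs_le])
  have hfin2 : (ν.prod (volume.restrict (Iic (0:ℝ)))) S2 < ⊤ := by
    rw [Measure.prod_apply hS2m]
    refine lt_of_le_of_lt ?_ hQfin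
    refine lintegral_mono_ae ?_
    filter_upwards [ae_restrict_mem measurableSet_Ioo] with u hu
    rw [hpre2 u hu, Measure.restrict_apply' measurableSet_Iic]
    have : Ici (Q u) ∩ Iic 0 = Icc (Q u) 0 := by
      ext x; simp only [mem_inter_iff, mem_Ici, mem_Iic, mem_Icc]
    rw [this, Real.volume_Icc]
    refine ENNReal.ofReal_le_ofReal ?_
    have := neg_abs_le (Q u)
    linarith
  -- a.e. first coordinate in Ioo 0 1
  have hae1 : ∀ᵐ p : ℝ × ℝ ∂(ν.prod (volume.restrict (Ioi (0:ℝ)))), p.1 ∈ Ioo (0:ℝ) 1 := by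
    rw [ae_iff]
    have hset : {p : ℝ × ℝ | ¬ p.1 ∈ Ioo (0:ℝ) 1} = (Ioo (0:ℝ) 1)ᶜ ×ˢ univ := by
      ext p; simp [mem_prod]
    rw [hset, Measure.prod_prod]
    have : ν ((Ioo (0:ℝ) 1)ᶜ) = 0 := by
      rw [hνapp, compl_inter_self]
      simp
    rw [this, zero_mul]
  have hae2 : ∀ᵐ p : ℝ × ℝ ∂(ν.prod (volume.restrict (Iic (0:ℝ)))), p.1 ∈ Ioo (0:ℝ) 1 := by
    rw [ae_iff]
    have hset : {p : ℝ × ℝ | ¬ p.1 ∈ Ioo (0:ℝ) 1} = (Ioo (0:ℝ) 1)ᶜ ×ˢ univ := by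
      ext p; simp [mem_prod]
    rw [hset, Measure.prod_prod]
    have : ν ((Ioo (0:ℝ) 1)ᶜ) = 0 := by
      rw [hνapp, compl_inter_self]
      simp
    rw [this, zero_mul]
  have hint1 : Integrable (Function.uncurry f1) (ν.prod (volume.restrict (Ioi (0:ℝ)))) := by
    refine Integrable.mono' (g := S1.indicator (fun _ => C)) ((integrable_indicator_iff hS1m).mpr
      ((integrableOn_const_iff).mpr (Or.inr hfin1))) hf1m.aestronglyMeasurable ?_
    filter_upwards [hae1] with p hp
    show ‖if F p.2 < p.1 then L p.1 else 0‖ ≤ S1.indicator (fun _ => C) p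
    by_cases h : F p.2 < p.1
    · have hmemS : p ∈ S1 := h
      rw [Set.indicator_of_mem hmemS, if_pos h, Real.norm_eq_abs]
      exact hC p.1 ⟨hp.1.le, hp.2.le⟩
    · have hmemS : p ∉ S1 := h
      rw [Set.indicator_of_notMem hmemS, if_neg h]
      simp
  have hint2 : Integrable (Function.uncurry f2) (ν.prod (volume.restrict (Iic (0:ℝ)))) := by
    refine Integrable.mono' (g := S2.indicator (fun _ => C)) ((integrable_indicator_iff hS2m).mpr
      ((integrableOn_const_iff).mpr (Or.inr hfin2))) hf2m.aestronglyMeasurable ?_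
    filter_upwards [hae2] with p hp
    show ‖if p.1 ≤ F p.2 then L p.1 else 0‖ ≤ S2.indicator (fun _ => C) p
    by_cases h : p.1 ≤ F p.2
    · have hmemS : p ∈ S2 := h
      rw [Set.indicator_of_mem hmemS, if_pos h, Real.norm_eq_abs]
      exact hC p.1 ⟨hp.1.le, hp.2.le⟩
    · have hmemS : p ∉ S2 := h
      rw [Set.indicator_of_notMem hmemS, if_neg h]
      simp
  -- inner x-integrals
  have hLeft1 : ∀ u ∈ Ioo (0:ℝ) 1, ∫ x in Ioi (0:ℝ), f1 u x = L u * max (Q u) 0 := by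
    intro u hu
    have e1 : (fun x => f1 u x) = (Iio (Q u)).indicator (fun _ => L u) := by
      funext x
      simp only [hf1def, indicator, mem_Iio]
      refine if_congr ?_ rfl rfl
      rw [← not_le, ← not_le, not_iff_not]
      exact (hgal u hu x).symm
    rw [e1, integral_indicator measurableSet_Iio, Measure.restrict_restrict measurableSet_Iio,
      setIntegral_const]
    have : Iio (Q u) ∩ Ioi 0 = Ioo 0 (Q u) := by
      ext x; simp only [mem_inter_iff, mem_Iio, mem_Ioi, mem_Ioo]; tauto
    rw [this, Real.volume_real_Ioo, smul_eq_mul, mul_comm]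
    rw [sub_zero]
  have hLeft2 : ∀ u ∈ Ioo (0:ℝ) 1, ∫ x in Iic (0:ℝ), f2 u x = L u * max (-(Q u)) 0 := by
    intro u hu
    have e1 : (fun x => f2 u x) = (Ici (Q u)).indicator (fun _ => L u) := by
      funext x
      simp only [hf2def, indicator, mem_Ici]
      exact if_congr ((hgal u hu x).symm) rfl rfl
    rw [e1, integral_indicator measurableSet_Ici, Measure.restrict_restrict measurableSet_Ici,
      setIntegral_const]
    have : Ici (Q u) ∩ Iic 0 = Icc (Q u) 0 := by
      ext x; simp only [mem_inter_iff, mem_Ici, mem_Iic, mem_Icc]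
    rw [this, Real.volume_real_Icc, smul_eq_mul, mul_comm]
    congr 1
    rw [zero_sub]
  have hRight1 : ∀ x : ℝ, ∫ u, f1 u x ∂ν = -(K x) := by
    intro x
    have e1 : (fun u => f1 u x) = (Ioi (F x)).indicator L := by
      funext u
      simp only [hf1def, indicator, mem_Ioi]
    rw [hνdef, e1, integral_indicator measurableSet_Ioi,
      Measure.restrict_restrict measurableSet_Ioi]
    have hset : Ioi (F x) ∩ Ioo 0 1 = Ioo (F x) 1 := by
      ext u
      simp only [mem_inter_iff, mem_Ioi, mem_Ioo]
      constructor
      · rintro ⟨h1, _, h3⟩; exact ⟨h1, h3⟩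
      · rintro ⟨h1, h2⟩; exact ⟨h1, lt_of_le_of_lt (hF0 x) h1, h2⟩
    rw [hset, ← integral_Ioc_eq_integral_Ioo, ← intervalIntegral.integral_of_le (hF1 x)]
    have hadd : (∫ v in (0:ℝ)..(F x), L v) + ∫ v in (F x)..(1:ℝ), L v
        = ∫ v in (0:ℝ)..(1:ℝ), L v :=
      intervalIntegral.integral_add_adjacent_intervals
        (hLcont.intervalIntegrable _ _) (hLcont.intervalIntegrable _ _)
    have hzero : (∫ v in (0:ℝ)..(1:ℝ), L v) = 0 := by
      rw [hLdef]; exact integral_shiftedLegendre_eq_zero (r-1) hm1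
    have hK : K x = ∫ v in (0:ℝ)..(F x), L v := by
      rw [hKdef]; rw [hLdef]; rfl
    rw [hzero] at hadd
    rw [hK]
    linarith
  have hRight2 : ∀ x : ℝ, ∫ u, f2 u x ∂ν = K x := by
    intro x
    have e1 : (fun u => f2 u x) = (Iic (F x)).indicator L := by
      funext u
      simp only [hf2def, indicator, mem_Iic]
    rw [hνdef, e1, integral_indicator measurableSet_Iic,
      Measure.restrict_restrict measurableSet_Iic]
    have hae : (Iic (F x) ∩ Ioo 0 1 : Set ℝ) =ᵐ[volume] Ioc 0 (F x) := by
      have h1 : ∀ᵐ u : ℝ ∂volume, u ≠ 1 := by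
        rw [ae_iff]
        simp only [not_not, setOf_eq_eq_singleton]
        exact Real.volume_singleton
      rw [Filter.eventuallyEq_set]
      filter_upwards [h1] with u hu
      simp only [mem_inter_iff, mem_Iic, mem_Ioo, mem_Ioc]
      constructor
      · rintro ⟨h2, h3, _⟩; exact ⟨h3, h2⟩
      · rintro ⟨h2, h3⟩
        exact ⟨h3, h2, lt_of_le_of_ne (le_trans h3 (hF1 x)) hu⟩
    rw [setIntegral_congr_set hae, ← intervalIntegral.integral_of_le (hF0 x)]
    rw [hKdef, hLdef]
    rfl
  have hsub : ∀ u : ℝ, Q u * L u = L u * max (Q u) 0 - L u * max (-(Q u)) 0 := by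
    intro u
    rw [← mul_sub, max_zero_sub_max_neg_zero_eq_self, mul_comm]
  have hP1int : Integrable (fun u => ∫ x in Ioi (0:ℝ), f1 u x) ν := by
    have h := hint1.integral_prod_left
    exact h
  have hP2int : Integrable (fun u => ∫ x in Iic (0:ℝ), f2 u x) ν := by
    have h := hint2.integral_prod_left
    exact h
  have hstep1 : ∫ u, (∫ x in Ioi (0:ℝ), f1 u x) ∂ν
      = ∫ x in Ioi (0:ℝ), (∫ u, f1 u x ∂ν) := integral_integral_swap hint1
  have hstep2 : ∫ u, (∫ x in Iic (0:ℝ), f2 u x) ∂ν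
      = ∫ x in Iic (0:ℝ), (∫ u, f2 u x ∂ν) := integral_integral_swap hint2
  have h1val : ∫ u, (∫ x in Ioi (0:ℝ), f1 u x) ∂ν = -∫ x in Ioi (0:ℝ), K x := by
    rw [hstep1]
    rw [show (fun x => ∫ u, f1 u x ∂ν) = fun x => -(K x) from funext hRight1]
    exact integral_neg _
  have h2val : ∫ u, (∫ x in Iic (0:ℝ), f2 u x) ∂ν = ∫ x in Iic (0:ℝ), K x := by
    rw [hstep2]
    rw [show (fun x => ∫ u, f2 u x ∂ν) = K from funext hRight2]
  have hKint1 : IntegrableOn K (Ioi (0:ℝ)) := by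
    have h := hint1.integral_prod_right
    have h2 : Integrable (fun x => -(K x)) (volume.restrict (Ioi (0:ℝ))) :=
      h.congr (Filter.Eventually.of_forall hRight1)
    have h3 : Integrable (fun x => K x) (volume.restrict (Ioi (0:ℝ))) := by
      have := h2.neg
      refine this.congr (Filter.Eventually.of_forall (fun x => ?_))
      show -(-(K x)) = K x
      rw [neg_neg]
    exact h3
  have hKint2 : IntegrableOn K (Iic (0:ℝ)) := by
    have h := hint2.integral_prod_right
    exact h.congr (Filter.Eventually.of_forall hRight2)
  have hlam2 : lam = (∫ u, (∫ x in Ioi (0:ℝ), f1 u x) ∂ν)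
      - (∫ u, (∫ x in Iic (0:ℝ), f2 u x) ∂ν) := by
    rw [hlam, ← integral_sub hP1int hP2int, hνdef]
    refine setIntegral_congr_fun measurableSet_Ioo (fun u hu => ?_)
    show Q u * L u = _
    rw [hsub u, hLeft1 u hu, hLeft2 u hu]
  rw [h1val, h2val] at hlam2
  rw [← intervalIntegral.integral_Iic_add_Ioi hKint2 hKint1]
  linarith
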